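/- Fix k > 0 and a natural number N ≥ 1, define F_{N,k}(x) := kx·(1 − (x/(x+1/k))^{N+1}) − (N+1)·(x/(x+1/k))^{N+1} for x ≥ 0, and let m := max_{x ≥ 0} F_{N,k}(x). Then for every c with 0 < c < m there exist exactly two distinct values x > 0 satisfying F_{N,k}(x) = c. -/

import Mathlib

open Finset Set

noncomputable def Gs (n : ℕ) (t : ℝ) : ℝ := (∑ j ∈ Finset.range n, t ^ (j+1)) - (n:ℝ) * t ^ n

noncomputable def Gs' (n : ℕ) (t : ℝ) : ℝ :=
  (∑ j ∈ Finset.range n, ((j:ℝ)+1) * t ^ j) - ((n:ℝ))^2 * t ^ (n-1)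

lemma hasDerivAt_Gs (n : ℕ) (t : ℝ) : HasDerivAt (Gs n) (Gs' n t) t := by
  have h1 : HasDerivAt (fun t : ℝ => ∑ j ∈ Finset.range n, t ^ (j+1))
      (∑ j ∈ Finset.range n, ((j:ℝ)+1) * t ^ j) t := by
    apply HasDerivAt.fun_sum
    intro j hj
    simpa using hasDerivAt_pow (j+1) t
  have h2 : HasDerivAt (fun t : ℝ => (n:ℝ) * t ^ n) ((n:ℝ)^2 * t^(n-1)) t := by
    have := (hasDerivAt_pow n t).const_mul (n:ℝ)
    rw [show (n:ℝ)^2 * t^(n-1) = n * (n * t^(n-1)) by ring]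
    exact this
  exact h1.sub h2

lemma Gs_zero (n : ℕ) (hn : 1 ≤ n) : Gs n 0 = 0 := by
  simp [Gs, zero_pow (by omega : n ≠ 0)]

lemma Gs_one (n : ℕ) : Gs n 1 = 0 := by
  simp [Gs]

lemma Gs'_cross (n : ℕ) (hn : 2 ≤ n) {s t : ℝ} (hs : 0 < s) (hst : s < t)
    (h : Gs' n s ≤ 0) : Gs' n t < 0 := by
  have ht : 0 < t := hs.trans hst
  have expand : t ^ (n-1) * Gs' n s - s ^ (n-1) * Gs' n t
      = ∑ j ∈ Finset.range n, ((j:ℝ)+1) * (t^(n-1) * s^j - s^(n-1) * t^j) := by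
    unfold Gs'
    rw [mul_sub, mul_sub, Finset.mul_sum, Finset.mul_sum, sub_sub_sub_comm,
      ← Finset.sum_sub_distrib]
    rw [show (t:ℝ)^(n-1) * ((n:ℝ)^2 * s^(n-1)) - s^(n-1) * ((n:ℝ)^2 * t^(n-1)) = 0 by ring,
      sub_zero]
    exact Finset.sum_congr rfl fun j _ => by ring
  have hpos : 0 < ∑ j ∈ Finset.range n, ((j:ℝ)+1) * (t^(n-1) * s^j - s^(n-1) * t^j) := by
    apply Finset.sum_pos'
    · intro j hj
      have hj' : j ≤ n - 1 := by simp at hj; omega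
      have hpow : s^(n-1-j) ≤ t^(n-1-j) := pow_le_pow_left₀ hs.le hst.le _
      have e1 : t^(n-1) = t^j * t^(n-1-j) := by rw [← pow_add]; congr 1; omega
      have e2 : s^(n-1) = s^j * s^(n-1-j) := by rw [← pow_add]; congr 1; omega
      have hnn : 0 ≤ t^(n-1) * s^j - s^(n-1) * t^j := by
        rw [e1, e2]
        have : 0 ≤ s^j * t^j * (t^(n-1-j) - s^(n-1-j)) :=
          mul_nonneg (by positivity) (by linarith)
        nlinarith [this]
      exact mul_nonneg (by positivity) hnn
    · refine ⟨0, Finset.mem_range.mpr (by omega), ?_⟩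
      have : s^(n-1) < t^(n-1) := pow_lt_pow_left₀ hst hs.le (by omega)
      simp only [pow_zero, mul_one, Nat.cast_zero, zero_add, one_mul]
      linarith
  rw [← expand] at hpos
  nlinarith [pow_pos hs (n-1), pow_pos ht (n-1)]

lemma Gs_continuous (n : ℕ) : Continuous (Gs n) :=
  Differentiable.continuous (fun t => (hasDerivAt_Gs n t).differentiableAt)

lemma Gs_unimodal (n : ℕ) (hn : 2 ≤ n) {tm : ℝ} (htm : tm ∈ Set.Icc (0:ℝ) 1)
    (hmax : ∀ u ∈ Set.Icc (0:ℝ) 1, Gs n u ≤ Gs n tm) :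
    StrictMonoOn (Gs n) (Set.Icc 0 tm) ∧ StrictAntiOn (Gs n) (Set.Icc tm 1) := by
  have hc := Gs_continuous n
  have hderiv : ∀ u : ℝ, deriv (Gs n) u = Gs' n u := fun u => (hasDerivAt_Gs n u).deriv
  constructor
  · apply strictMonoOn_of_deriv_pos (convex_Icc 0 tm) hc.continuousOn
    intro u hu
    rw [interior_Icc] at hu
    rw [hderiv]
    by_contra hle
    push_neg at hle
    have hanti : StrictAntiOn (Gs n) (Set.Icc u 1) := by
      apply strictAntiOn_of_deriv_neg (convex_Icc u 1) hc.continuousOn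
      intro v hv
      rw [interior_Icc] at hv
      rw [hderiv]
      exact Gs'_cross n hn hu.1 hv.1 hle
    have h1 : Gs n tm < Gs n u :=
      hanti ⟨le_refl u, hu.2.le.trans htm.2⟩ ⟨hu.2.le, htm.2⟩ hu.2
    have h2 := hmax u ⟨hu.1.le, hu.2.le.trans htm.2⟩
    linarith
  · apply strictAntiOn_of_deriv_neg (convex_Icc tm 1) hc.continuousOn
    intro u hu
    rw [interior_Icc] at hu
    rw [hderiv]
    by_contra hle
    push_neg at hle
    have hu0 : 0 < u := lt_of_le_of_lt htm.1 hu.1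
    have hpos : ∀ v ∈ Set.Ioo (0:ℝ) u, 0 < Gs' n v := by
      intro v hv
      by_contra hv'
      push_neg at hv'
      exact absurd (Gs'_cross n hn hv.1 hv.2 hv') (by linarith)
    have hmono : StrictMonoOn (Gs n) (Set.Icc 0 u) := by
      apply strictMonoOn_of_deriv_pos (convex_Icc 0 u) hc.continuousOn
      intro v hv
      rw [interior_Icc] at hv
      rw [hderiv]
      exact hpos v hv
    have h1 : Gs n tm < Gs n u := hmono ⟨htm.1, hu.1.le⟩ ⟨hu0.le, le_refl u⟩ hu.1
    have h2 := hmax u ⟨hu0.le, hu.2.le⟩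
    linarith

/-- For `k > 0`, `N ≥ 1`, with `F_{N,k}` as in the silicosis model and
`m = max_{x ≥ 0} F_{N,k}(x)`, for every `0 < c < m` there exist exactly two distinct
positive solutions of `F_{N,k}(x) = c`. -/
theorem silicosis_exactly_two_equilibria (k : ℝ) (hk : 0 < k) (N : ℕ) (hN : 1 ≤ N)
    (F : ℝ → ℝ)
    (hF : ∀ x : ℝ, F x =
      k * x * (1 - (x / (x + 1 / k)) ^ (N + 1)) - (N + 1) * (x / (x + 1 / k)) ^ (N + 1))
    (m : ℝ) (hm : IsGreatest (F '' Set.Ici 0) m) :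
    ∀ c : ℝ, 0 < c → c < m →
      ∃ x₁ x₂ : ℝ, 0 < x₁ ∧ 0 < x₂ ∧ x₁ ≠ x₂ ∧ F x₁ = c ∧ F x₂ = c ∧
        ∀ x : ℝ, 0 < x → F x = c → x = x₁ ∨ x = x₂ := by
  intro c hc0 hcm
  have hn2 : 2 ≤ N + 1 := by omega
  set n := N + 1 with hndef
  -- the substitution x ↦ k x/(k x + 1) turns F into Gs n
  have hFG : ∀ x : ℝ, 0 ≤ x → F x = Gs n (k*x/(k*x+1)) := by
    intro x hx
    have hkx1 : (0:ℝ) < k*x + 1 := by positivity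
    have heq : x / (x + 1/k) = k*x/(k*x+1) := by
      rw [div_eq_div_iff (by positivity) (ne_of_gt hkx1)]
      field_simp
    set t := k*x/(k*x+1) with htdef
    have hkxt : k*x*(1-t) = t := by
      rw [htdef]
      field_simp
      ring
    have hg : (∑ j ∈ Finset.range n, t^j) * (t-1) = t^n - 1 := geom_sum_mul t n
    have hsum : ∑ j ∈ Finset.range n, t^(j+1) = k*x*(1-t^n) := by
      have e1 : ∑ j ∈ Finset.range n, t^(j+1) = t * ∑ j ∈ Finset.range n, t^j := by
        rw [Finset.mul_sum]
        exact Finset.sum_congr rfl fun j _ => by ring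
      rw [e1]
      linear_combination (-(∑ j ∈ Finset.range n, t^j)) * hkxt - (k*x) * hg
    rw [hF, heq]
    show k * x * (1 - t ^ n) - (↑N + 1) * t ^ n = Gs n t
    rw [Gs, hsum]
    push_cast [hndef]
    ring
  -- inverse substitution
  have hψ : ∀ s : ℝ, 0 ≤ s → s < 1 →
      0 ≤ s/(k*(1-s)) ∧ k*(s/(k*(1-s)))/(k*(s/(k*(1-s)))+1) = s := by
    intro s hs0 hs1
    have h1s : (0:ℝ) < 1 - s := by linarith
    constructor
    · positivity
    · have h1 : k*(s/(k*(1-s))) = s/(1-s) := by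
        field_simp
      rw [h1, div_add' _ _ _ (ne_of_gt h1s), show s + 1*(1-s) = 1 by ring,
        ]
      field_simp
  have hφinj : ∀ x y : ℝ, 0 ≤ x → 0 ≤ y → k*x/(k*x+1) = k*y/(k*y+1) → x = y := by
    intro x y hx hy h
    have h1 : (0:ℝ) < k*x+1 := by positivity
    have h2 : (0:ℝ) < k*y+1 := by positivity
    rw [div_eq_div_iff (ne_of_gt h1) (ne_of_gt h2)] at h
    have : k*x = k*y := by nlinarith
    exact mul_left_cancel₀ (ne_of_gt hk) this
  have hφmem : ∀ x : ℝ, 0 ≤ x → k*x/(k*x+1) ∈ Set.Icc (0:ℝ) 1 ∧ k*x/(k*x+1) < 1 := by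
    intro x hx
    have hkx1 : (0:ℝ) < k*x + 1 := by positivity
    have h1 : k*x/(k*x+1) < 1 := by
      rw [div_lt_one hkx1]
      nlinarith
    exact ⟨⟨by positivity, h1.le⟩, h1⟩
  -- maximum of Gs on [0,1]
  obtain ⟨tm, htm, hmax'⟩ := isCompact_Icc.exists_isMaxOn (Set.nonempty_Icc.mpr zero_le_one)
    (Gs_continuous n).continuousOn
  have hmax : ∀ u ∈ Set.Icc (0:ℝ) 1, Gs n u ≤ Gs n tm := fun u hu => hmax' hu
  -- Gs n tm = m
  obtain ⟨x₀, hx₀, hFx₀⟩ := hm.1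
  have hx₀' : (0:ℝ) ≤ x₀ := hx₀
  have hmle : m ≤ Gs n tm := by
    rw [← hFx₀, hFG x₀ hx₀']
    exact hmax _ (hφmem x₀ hx₀').1
  have hGtm_pos : 0 < Gs n tm := lt_of_lt_of_le (hc0.trans hcm) hmle
  have htm0 : 0 < tm := by
    rcases lt_or_eq_of_le htm.1 with h | h
    · exact h
    · exfalso; rw [← h, Gs_zero n (by omega)] at hGtm_pos; linarith
  have htm1 : tm < 1 := by
    rcases lt_or_eq_of_le htm.2 with h | h
    · exact h
    · exfalso; rw [h, Gs_one n] at hGtm_pos; linarith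
  have hGm : Gs n tm = m := by
    refine le_antisymm ?_ hmle
    obtain ⟨hx', hφx'⟩ := hψ tm htm.1 htm1
    have : F (tm/(k*(1-tm))) = Gs n tm := by rw [hFG _ hx', hφx']
    rw [← this]
    exact hm.2 ⟨_, hx', this ▸ rfl⟩
  obtain ⟨hmono, hanti⟩ := Gs_unimodal n hn2 htm hmax
  -- IVT on both sides
  have hcmem : c ∈ Set.Icc (Gs n 0) (Gs n tm) := by
    rw [Gs_zero n (by omega), hGm]; exact ⟨hc0.le, hcm.le⟩
  obtain ⟨s₁, hs₁mem, hs₁⟩ := intermediate_value_Icc htm.1 (Gs_continuous n).continuousOn hcmem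
  have hcmem' : c ∈ Set.Icc (Gs n 1) (Gs n tm) := by
    rw [Gs_one n, hGm]; exact ⟨hc0.le, hcm.le⟩
  obtain ⟨s₂, hs₂mem, hs₂⟩ := intermediate_value_Icc' htm.2 (Gs_continuous n).continuousOn hcmem'
  have hs₁0 : 0 < s₁ := by
    rcases lt_or_eq_of_le hs₁mem.1 with h | h
    · exact h
    · exfalso; rw [← h, Gs_zero n (by omega)] at hs₁; linarith
  have hs₁tm : s₁ < tm := by
    rcases lt_or_eq_of_le hs₁mem.2 with h | h
    · exact h
    · exfalso; rw [h, hGm] at hs₁; linarith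
  have hs₂tm : tm < s₂ := by
    rcases lt_or_eq_of_le hs₂mem.1 with h | h
    · exact h
    · exfalso; rw [← h, hGm] at hs₂; linarith
  have hs₂1 : s₂ < 1 := by
    rcases lt_or_eq_of_le hs₂mem.2 with h | h
    · exact h
    · exfalso; rw [h, Gs_one n] at hs₂; linarith
  -- construct x₁, x₂
  obtain ⟨hx₁nn, hφx₁⟩ := hψ s₁ hs₁0.le (hs₁tm.trans htm1)
  obtain ⟨hx₂nn, hφx₂⟩ := hψ s₂ (htm.1.trans hs₂mem.1) hs₂1
  set x₁ := s₁/(k*(1-s₁)) with hx₁def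
  set x₂ := s₂/(k*(1-s₂)) with hx₂def
  have hx₁pos : 0 < x₁ := by
    have : (0:ℝ) < 1 - s₁ := by linarith [hs₁tm.trans htm1]
    rw [hx₁def]; positivity
  have hx₂pos : 0 < x₂ := by
    have h0 : (0:ℝ) < s₂ := htm0.trans hs₂tm
    have : (0:ℝ) < 1 - s₂ := by linarith
    rw [hx₂def]; positivity
  have hFx₁ : F x₁ = c := by rw [hFG x₁ hx₁nn, hφx₁, hs₁]
  have hFx₂ : F x₂ = c := by rw [hFG x₂ hx₂nn, hφx₂, hs₂]
  have hx₁₂ : x₁ ≠ x₂ := by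
    intro h
    have : s₁ = s₂ := by rw [← hφx₁, ← hφx₂, h]
    linarith [hs₁tm, hs₂tm]
  refine ⟨x₁, x₂, hx₁pos, hx₂pos, hx₁₂, hFx₁, hFx₂, ?_⟩
  -- uniqueness
  intro x hx hFx
  set t := k*x/(k*x+1) with htdef
  obtain ⟨htmem, ht1⟩ := hφmem x hx.le
  have hGt : Gs n t = c := by rw [← hFG x hx.le, hFx]
  have httm : t ≠ tm := by
    intro h
    rw [h, hGm] at hGt
    linarith
  rcases lt_or_gt_of_ne httm with h | h
  · left
    have : t = s₁ := hmono.injOn ⟨htmem.1, h.le⟩ ⟨hs₁mem.1, hs₁mem.2⟩ (by rw [hGt, hs₁])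
    apply hφinj x x₁ hx.le hx₁nn
    rw [← htdef, this, hφx₁]
  · right
    have : t = s₂ := hanti.injOn ⟨h.le, ht1.le⟩ ⟨hs₂mem.1, hs₂mem.2⟩ (by rw [hGt, hs₂])
    apply hφinj x x₂ hx.le hx₂nn
    rw [← htdef, this, hφx₂]
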